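/- Define D(a,r) = (a-1)^{r-1} r^r / (a^{r-1} (r-1)^{r-1}) for real r > 1 and integer a ≥ 2, and let r(a) be the solution of D(a, r(a)) = 1 with r(a) > 1. Then for all sufficiently large a, a(log a + log log a) < r(a) < a(log a + log log a + 2); consequently r(a)/(a·H_a) → 1 as a → ∞. -/

import Mathlib

open Filter Real

private lemma logdiff_le {x y : ℝ} (hx : 0 < x) (hxy : x ≤ y) :
    Real.log y - Real.log x ≤ (y - x) / x := by
  have hy : 0 < y := lt_of_lt_of_le hx hxy
  have h := Real.log_le_sub_one_of_pos (show 0 < y / x by positivity)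
  rw [Real.log_div hy.ne' hx.ne'] at h
  have h2 : y / x - 1 = (y - x) / x := by field_simp
  linarith [h2 ▸ h]

private lemma le_logdiff {x y : ℝ} (hx : 0 < x) (hxy : x ≤ y) :
    (y - x) / y ≤ Real.log y - Real.log x := by
  have hy : 0 < y := lt_of_lt_of_le hx hxy
  have h := Real.log_le_sub_one_of_pos (show 0 < x / y by positivity)
  rw [Real.log_div hx.ne' hy.ne'] at h
  have h2 : x / y - 1 = -((y - x) / y) := by field_simp; ring
  linarith [h2 ▸ h]

private lemma exp_ten_ge : (1024 : ℝ) ≤ Real.exp 10 := by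
  have h2 : (2 : ℝ) ≤ Real.exp 1 := by
    have := Real.exp_one_gt_d9
    linarith
  calc (1024 : ℝ) = 2 ^ (10 : ℕ) := by norm_num
    _ ≤ Real.exp 1 ^ (10 : ℕ) := by gcongr <;> norm_num
    _ = Real.exp 10 := by rw [← Real.exp_nat_mul]; norm_num

set_option maxHeartbeats 1000000 in
private lemma key_bounds {a : ℕ} (ha : Real.exp (Real.exp 10) ≤ (a : ℝ)) {s : ℝ} (hs : 1 < s)
    (heq : ((a : ℝ) - 1) ^ (s - 1) * s ^ s
        / ((a : ℝ) ^ (s - 1) * (s - 1) ^ (s - 1)) = 1) :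
    (a : ℝ) * (Real.log a + Real.log (Real.log a)) < s ∧
      s < (a : ℝ) * (Real.log a + Real.log (Real.log a) + 2) := by
  set A : ℝ := (a : ℝ) with hA
  have hApos : (0 : ℝ) < A := lt_of_lt_of_le (Real.exp_pos _) ha
  set l : ℝ := Real.log A with hl
  set m : ℝ := Real.log l with hm
  have hexp10 : (1024 : ℝ) ≤ Real.exp 10 := exp_ten_ge
  have hl10 : Real.exp 10 ≤ l := by
    have := Real.log_le_log (Real.exp_pos _) ha
    rwa [Real.log_exp] at this
  have hl1024 : (1024 : ℝ) ≤ l := le_trans hexp10 hl10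
  have hlpos : (0 : ℝ) < l := by linarith
  have hm10 : (10 : ℝ) ≤ m := by
    have := Real.log_le_log (Real.exp_pos _) hl10
    rw [Real.log_exp] at this
    rw [hm]; exact this
  have hml : m ≤ l - 1 := Real.log_le_sub_one_of_pos hlpos
  have hA3 : (3 : ℝ) < A := by
    have := Real.add_one_le_exp (Real.exp 10)
    linarith
  -- A ≥ l^3/27
  have hA_cube : l ^ 3 / 27 ≤ A := by
    have h1 : Real.exp (l / 3) ^ (3 : ℕ) = Real.exp l := by
      rw [← Real.exp_nat_mul]; ring_nf
    have h2 : l / 3 ≤ Real.exp (l / 3) := by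
      have := Real.add_one_le_exp (l / 3); linarith
    have h3 : (l / 3) ^ (3 : ℕ) ≤ Real.exp (l / 3) ^ (3 : ℕ) := by
      gcongr
    have h4 : Real.exp l ≤ A := by
      rw [hl, Real.exp_log hApos]
    calc l ^ 3 / 27 = (l / 3) ^ (3 : ℕ) := by ring
      _ ≤ Real.exp l := h1 ▸ h3
      _ ≤ A := h4
  have h4l : 4 * l ^ 2 + 1 ≤ A := by
    have hcube2 : 1024 * l ^ 2 ≤ l ^ 3 := by
      nlinarith [mul_le_mul_of_nonneg_right hl1024 (sq_nonneg l)]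
    have hl2 : (1 : ℝ) ≤ l ^ 2 := by nlinarith
    linarith
  -- 2m + 4 ≤ l
  have hsqrtl : (32 : ℝ) ≤ Real.sqrt l := by
    rw [show (32:ℝ) = Real.sqrt (32^2) by rw [Real.sqrt_sq]; norm_num]
    exact Real.sqrt_le_sqrt (by nlinarith)
  have hmsqrt : m ≤ 2 * Real.sqrt l - 2 := by
    have h1 : Real.log (Real.sqrt l) = Real.log l / 2 := Real.log_sqrt hlpos.le
    have h2 : Real.log (Real.sqrt l) ≤ Real.sqrt l - 1 :=
      Real.log_le_sub_one_of_pos (by positivity)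
    rw [h1] at h2
    rw [hm]; linarith
  have h2m4 : 2 * m + 4 ≤ l := by
    have hll : Real.sqrt l * Real.sqrt l = l := Real.mul_self_sqrt hlpos.le
    nlinarith [hll, hmsqrt, mul_le_mul_of_nonneg_right hsqrtl (Real.sqrt_nonneg l)]
  -- equation manipulations
  have hs0 : (0 : ℝ) < s := by linarith
  have hs1 : (0 : ℝ) < s - 1 := by linarith
  have hA1 : (0 : ℝ) < A - 1 := by linarith
  have hden : (0 : ℝ) < A ^ (s - 1) * (s - 1) ^ (s - 1) := by positivity
  rw [div_eq_one_iff_eq hden.ne'] at heq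
  have hstar : (s - 1) * Real.log (A - 1) + s * Real.log s
      = (s - 1) * Real.log A + (s - 1) * Real.log (s - 1) := by
    have h := congrArg Real.log heq
    rw [Real.log_mul (by positivity) (by positivity),
        Real.log_mul (by positivity) (by positivity),
        Real.log_rpow hA1, Real.log_rpow hs0, Real.log_rpow hApos, Real.log_rpow hs1] at h
    linarith
  have hkey : Real.log s = (s - 1) * (Real.log A - Real.log (A - 1))
      - (s - 1) * (Real.log s - Real.log (s - 1)) := by linear_combination hstar
  -- bounds on the log differences
  have hc_up : Real.log A - Real.log (A - 1) ≤ 1 / (A - 1) := by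
    have h := logdiff_le hA1 (by linarith : A - 1 ≤ A)
    have h2 : (A - (A - 1)) / (A - 1) = 1 / (A - 1) := by ring_nf
    linarith [h2 ▸ h]
  have hc_lo : 1 / A ≤ Real.log A - Real.log (A - 1) := by
    have h := le_logdiff hA1 (by linarith : A - 1 ≤ A)
    have h2 : (A - (A - 1)) / A = 1 / A := by ring_nf
    linarith [h2 ▸ h]
  have hd_lo : 1 / s ≤ Real.log s - Real.log (s - 1) := by
    have h := le_logdiff hs1 (by linarith : s - 1 ≤ s)
    have h2 : (s - (s - 1)) / s = 1 / s := by ring_nf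
    linarith [h2 ▸ h]
  have hd_up : Real.log s - Real.log (s - 1) ≤ 1 / (s - 1) := by
    have h := logdiff_le hs1 (by linarith : s - 1 ≤ s)
    have h2 : (s - (s - 1)) / (s - 1) = 1 / (s - 1) := by ring_nf
    linarith [h2 ▸ h]
  constructor
  · -- lower bound : A * (l + m) < s
    by_contra hcon
    push_neg at hcon
    set L : ℝ := A * (l + m) with hL
    have hlm : (0 : ℝ) < l + m := by linarith
    have hL1 : (1 : ℝ) < L := by
      have h := mul_le_mul hA3.le (show (1:ℝ) ≤ l + m by linarith) (by norm_num) (by linarith)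
      rw [mul_one] at h
      linarith
    have hL1' : L - 1 ≠ 0 := by linarith
    -- Step 1 : log s ≤ (s-1)/(A-1)
    have hb1 : (s - 1) * (Real.log A - Real.log (A - 1)) ≤ (s - 1) * (1 / (A - 1)) :=
      mul_le_mul_of_nonneg_left hc_up (by linarith)
    have hb2 : 0 ≤ (s - 1) * (Real.log s - Real.log (s - 1)) :=
      mul_nonneg (by linarith) (le_trans (by positivity) hd_lo)
    have hstep1 : Real.log s ≤ (s - 1) / (A - 1) := by
      have he : (s - 1) * (1 / (A - 1)) = (s - 1) / (A - 1) := by ring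
      linarith [he ▸ hb1, hkey]
    -- Step 2 : (L-1)/(A-1) < log L
    have hlogL : Real.log L = l + Real.log (l + m) := by
      rw [hL, Real.log_mul hApos.ne' hlm.ne']
    have hlog2 : m + m / (l + m) ≤ Real.log (l + m) := by
      have h := le_logdiff hlpos (by linarith : l ≤ l + m)
      have h2 : (l + m - l) / (l + m) = m / (l + m) := by ring_nf
      rw [h2] at h
      rw [hm] at h ⊢
      linarith
    have hq : (l + m) / (A - 1) < m / (l + m) := by
      rw [div_lt_div_iff₀ hA1 hlm]
      have e1 : (l + m) * (l + m) ≤ 4 * l ^ 2 := by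
        nlinarith [mul_nonneg (show (0:ℝ) ≤ l - m by linarith)
          (show (0:ℝ) ≤ 3 * l + m by linarith)]
      have e3 : 10 * (A - 1) ≤ m * (A - 1) :=
        mul_le_mul_of_nonneg_right hm10 (by linarith)
      have e5 : (0 : ℝ) < (l + m) * (l + m) := by positivity
      linarith
    have hLA : (L - 1) / (A - 1) < Real.log L := by
      have hLdiv : L / (A - 1) = (l + m) + (l + m) / (A - 1) := by
        rw [hL]; field_simp; ring
      have h1 : (L - 1) / (A - 1) < L / (A - 1) := by
        rw [div_lt_div_iff₀ hA1 hA1]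
        nlinarith
      have h2 : L / (A - 1) < (l + m) + m / (l + m) := by
        rw [hLdiv]; linarith
      rw [hlogL]
      linarith
    -- Step 3 : concavity
    have hnu0 : 0 ≤ (s - 1) / (L - 1) := div_nonneg (by linarith) (by linarith)
    have hmu0 : 0 ≤ (L - s) / (L - 1) := by
      apply div_nonneg (by linarith) (by linarith)
    have hsum : (L - s) / (L - 1) + (s - 1) / (L - 1) = 1 := by
      rw [← add_div, div_eq_one_iff_eq hL1']; ring
    have hcomb := (strictConcaveOn_log_Ioi.concaveOn).2
      (Set.mem_Ioi.mpr one_pos) (Set.mem_Ioi.mpr (by linarith : (0:ℝ) < L))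
      hmu0 hnu0 hsum
    have hcx : (L - s) / (L - 1) + (s - 1) / (L - 1) * L = s := by
      rw [div_mul_eq_mul_div, ← add_div, div_eq_iff hL1']; ring
    simp only [smul_eq_mul, mul_one, Real.log_one, mul_zero, zero_add] at hcomb
    rw [hcx] at hcomb
    have hnupos : 0 < (s - 1) / (L - 1) := div_pos (by linarith) (by linarith)
    have hfin : (s - 1) / (L - 1) * ((L - 1) / (A - 1)) < (s - 1) / (L - 1) * Real.log L :=
      mul_lt_mul_of_pos_left hLA hnupos
    have hfin2 : (s - 1) / (L - 1) * ((L - 1) / (A - 1)) = (s - 1) / (A - 1) := by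
      rw [div_mul_div_comm, mul_comm (L - 1) (A - 1), mul_div_mul_right _ _ hL1']
    linarith [hfin2 ▸ hfin, hcomb, hstep1]
  · -- upper bound : s < A * (l + m + 2)
    by_contra hcon
    push_neg at hcon
    set U : ℝ := A * (l + m + 2) with hU
    have hAU : A ≤ U := by
      have h := mul_le_mul_of_nonneg_left (show (1:ℝ) ≤ l + m + 2 by linarith) hApos.le
      rw [mul_one] at h
      rw [hU]; exact h
    have hUpos : (0 : ℝ) < U := by linarith
    -- Step 1 : (s-1)/A - 1 ≤ log s
    have hb1 : (s - 1) * (1 / A) ≤ (s - 1) * (Real.log A - Real.log (A - 1)) :=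
      mul_le_mul_of_nonneg_left hc_lo (by linarith)
    have hb2 : (s - 1) * (Real.log s - Real.log (s - 1)) ≤ 1 := by
      have h := mul_le_mul_of_nonneg_left hd_up (show (0:ℝ) ≤ s - 1 by linarith)
      have he : (s - 1) * (1 / (s - 1)) = 1 := by field_simp
      linarith [he ▸ h]
    have hstep1 : (s - 1) / A - 1 ≤ Real.log s := by
      have he : (s - 1) * (1 / A) = (s - 1) / A := by ring
      linarith [he ▸ hb1, hkey]
    -- Step 2 : log s ≤ log U + (s - U)/A
    have hstep2 : Real.log s ≤ Real.log U + (s - U) / A := by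
      have h1 := logdiff_le hUpos hcon
      have h2 : (s - U) / U ≤ (s - U) / A :=
        div_le_div_of_nonneg_left (by linarith) hApos hAU
      linarith
    -- Step 3 : U - 1 ≤ A * (log U + 1)
    have hstep3 : U - 1 ≤ A * (Real.log U + 1) := by
      have h1 : (U - 1) / A - 1 ≤ Real.log U := by
        have he : (s - 1) / A - (s - U) / A = (U - 1) / A := by ring
        linarith [hstep1, hstep2, he]
      have h2 := mul_le_mul_of_nonneg_left h1 hApos.le
      have he2 : A * ((U - 1) / A - 1) = U - 1 - A := by
        field_simp
      linarith [he2 ▸ h2]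
    -- Step 4 : contradiction
    have hlm2 : (0 : ℝ) < l + m + 2 := by linarith
    have hlogU : Real.log U = l + Real.log (l + m + 2) := by
      rw [hU, Real.log_mul hApos.ne' hlm2.ne']
    have hlog3 : Real.log (l + m + 2) ≤ m + (m + 2) / l := by
      have h := logdiff_le hlpos (by linarith : l ≤ l + m + 2)
      have h2 : (l + m + 2 - l) / l = (m + 2) / l := by ring_nf
      rw [h2] at h
      rw [hm] at h ⊢
      linarith
    have hp : (m + 2) / l ≤ 1 / 2 := by
      rw [div_le_iff₀ hlpos]; linarith
    have hApA : A * ((m + 2) / l) ≤ A * (1 / 2) :=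
      mul_le_mul_of_nonneg_left hp hApos.le
    have hmono : A * (Real.log U + 1) ≤ A * (l + m + (m + 2) / l + 1) := by
      apply mul_le_mul_of_nonneg_left _ hApos.le
      rw [hlogU]; linarith
    have hexp : A * (l + m + (m + 2) / l + 1) = A * (l + m + 2) - A + A * ((m + 2) / l) := by
      ring
    have hUval : U = A * (l + m + 2) := hU
    linarith [hstep3, hmono, hexp ▸ hmono, hApA]

private lemma harmonic_sum_eq (a : ℕ) :
    ∑ i ∈ Finset.Icc 1 a, (1 : ℝ) / i = ((harmonic a : ℚ) : ℝ) := by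
  rw [harmonic_eq_sum_Icc]
  push_cast
  simp [one_div]

private lemma tendsto_loglog_div_log :
    Tendsto (fun a : ℕ => Real.log (Real.log a) / Real.log a) atTop (nhds 0) := by
  have h1 : Tendsto (fun x : ℝ => Real.log x / x) atTop (nhds 0) :=
    Real.isLittleO_log_id_atTop.tendsto_div_nhds_zero
  exact h1.comp (Real.tendsto_log_atTop.comp tendsto_natCast_atTop_atTop)

private lemma tendsto_one_div_log :
    Tendsto (fun a : ℕ => 1 / Real.log a) atTop (nhds 0) := by
  have h1 : Tendsto (fun x : ℝ => 1 / x) atTop (nhds 0) := by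
    simpa [one_div] using tendsto_inv_atTop_zero
  exact h1.comp (Real.tendsto_log_atTop.comp tendsto_natCast_atTop_atTop)

theorem stmt_16 (r : ℕ → ℝ)
    (hr : ∀ a : ℕ, 2 ≤ a → 1 < r a ∧
      ((a : ℝ) - 1) ^ (r a - 1) * (r a) ^ (r a)
        / ((a : ℝ) ^ (r a - 1) * (r a - 1) ^ (r a - 1)) = 1) :
    (∃ a₀ : ℕ, ∀ a : ℕ, a₀ ≤ a →
      (a : ℝ) * (Real.log a + Real.log (Real.log a)) < r a ∧
      r a < (a : ℝ) * (Real.log a + Real.log (Real.log a) + 2)) ∧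
    Tendsto (fun a : ℕ => r a / ((a : ℝ) * ∑ i ∈ Finset.Icc 1 a, (1 : ℝ) / i))
      atTop (nhds 1) := by
  set a₀ : ℕ := max 2 ⌈Real.exp (Real.exp 10)⌉₊ with ha₀
  have hbound : ∀ a : ℕ, a₀ ≤ a →
      (a : ℝ) * (Real.log a + Real.log (Real.log a)) < r a ∧
      r a < (a : ℝ) * (Real.log a + Real.log (Real.log a) + 2) := by
    intro a haa
    have ha2 : 2 ≤ a := le_trans (le_max_left _ _) haa
    have haR : Real.exp (Real.exp 10) ≤ (a : ℝ) := by
      refine le_trans (Nat.le_ceil _) ?_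
      exact_mod_cast le_trans (le_max_right _ _) haa
    obtain ⟨hs, heq⟩ := hr a ha2
    exact key_bounds haR hs heq
  refine ⟨⟨a₀, hbound⟩, ?_⟩
  -- limits of the sandwich bounds
  have hlb : Tendsto (fun a : ℕ =>
      (Real.log a + Real.log (Real.log a)) / (Real.log a + 1)) atTop (nhds 1) := by
    have hA : Tendsto (fun a : ℕ => (1:ℝ) + Real.log (Real.log a) / Real.log a)
        atTop (nhds (1 + 0)) := tendsto_const_nhds.add tendsto_loglog_div_log
    have hB : Tendsto (fun a : ℕ => (1:ℝ) + 1 / Real.log a)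
        atTop (nhds (1 + 0)) := tendsto_const_nhds.add tendsto_one_div_log
    have h := hA.div hB (by norm_num : (1:ℝ) + 0 ≠ 0)
    have h' : Tendsto (fun a : ℕ =>
        ((1:ℝ) + Real.log (Real.log a) / Real.log a) / (1 + 1 / Real.log a))
        atTop (nhds 1) := by simpa [Pi.div_def] using h
    apply h'.congr'
    filter_upwards [(Real.tendsto_log_atTop.comp
      tendsto_natCast_atTop_atTop).eventually_gt_atTop 0] with a hla
    have hla' : Real.log (a : ℝ) ≠ 0 := ne_of_gt hla
    field_simp
  have hub : Tendsto (fun a : ℕ =>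
      (Real.log a + Real.log (Real.log a) + 2) / Real.log a) atTop (nhds 1) := by
    have hA : Tendsto (fun a : ℕ => (1:ℝ) + Real.log (Real.log a) / Real.log a)
        atTop (nhds (1 + 0)) := tendsto_const_nhds.add tendsto_loglog_div_log
    have h := hA.add (tendsto_one_div_log.const_mul 2)
    have h' : Tendsto (fun a : ℕ =>
        (1:ℝ) + Real.log (Real.log a) / Real.log a + 2 * (1 / Real.log a))
        atTop (nhds 1) := by simpa using h
    apply h'.congr'
    filter_upwards [(Real.tendsto_log_atTop.comp
      tendsto_natCast_atTop_atTop).eventually_gt_atTop 0] with a hla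
    have hla' : Real.log (a : ℝ) ≠ 0 := ne_of_gt hla
    field_simp
  refine tendsto_of_tendsto_of_tendsto_of_le_of_le' hlb hub ?_ ?_
  · -- lower bound eventually
    filter_upwards [eventually_ge_atTop a₀,
      (Real.tendsto_log_atTop.comp tendsto_natCast_atTop_atTop).eventually_gt_atTop 0,
      ((Real.tendsto_log_atTop.comp (Real.tendsto_log_atTop.comp
        tendsto_natCast_atTop_atTop)).eventually_gt_atTop 0)]
      with a haa hl hll
    have hl' : (0:ℝ) < Real.log a := hl
    have hll' : (0:ℝ) < Real.log (Real.log a) := hll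
    have ha2 : 2 ≤ a := le_trans (le_max_left _ _) haa
    have hApos : (0:ℝ) < (a:ℝ) := by exact_mod_cast Nat.lt_of_lt_of_le Nat.zero_lt_two ha2
    have hH_lo : Real.log a ≤ ∑ i ∈ Finset.Icc 1 a, (1 : ℝ) / i := by
      rw [harmonic_sum_eq]
      have h1 : Real.log a ≤ Real.log ((a:ℝ) + 1) :=
        Real.log_le_log hApos (by linarith)
      have h2 := log_add_one_le_harmonic a
      push_cast at h2
      linarith
    have hHpos : (0:ℝ) < ∑ i ∈ Finset.Icc 1 a, (1 : ℝ) / i := lt_of_lt_of_le hl' hH_lo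
    have hH_hi : ∑ i ∈ Finset.Icc 1 a, (1 : ℝ) / i ≤ 1 + Real.log a := by
      rw [harmonic_sum_eq]
      exact_mod_cast harmonic_le_one_add_log a
    have hra := (hbound a haa).1
    have hAH : (0:ℝ) < (a:ℝ) * ∑ i ∈ Finset.Icc 1 a, (1 : ℝ) / i := mul_pos hApos hHpos
    calc (Real.log a + Real.log (Real.log a)) / (Real.log a + 1)
        ≤ (Real.log a + Real.log (Real.log a)) / (∑ i ∈ Finset.Icc 1 a, (1 : ℝ) / i) :=
          div_le_div_of_nonneg_left (by linarith) hHpos (by linarith)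
      _ = ((a:ℝ) * (Real.log a + Real.log (Real.log a)))
            / ((a:ℝ) * ∑ i ∈ Finset.Icc 1 a, (1 : ℝ) / i) :=
          (mul_div_mul_left _ _ hApos.ne').symm
      _ ≤ r a / ((a:ℝ) * ∑ i ∈ Finset.Icc 1 a, (1 : ℝ) / i) :=
          by gcongr
  · -- upper bound eventually
    filter_upwards [eventually_ge_atTop a₀,
      (Real.tendsto_log_atTop.comp tendsto_natCast_atTop_atTop).eventually_gt_atTop 0,
      ((Real.tendsto_log_atTop.comp (Real.tendsto_log_atTop.comp
        tendsto_natCast_atTop_atTop)).eventually_gt_atTop 0)]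
      with a haa hl hll
    have hl' : (0:ℝ) < Real.log a := hl
    have hll' : (0:ℝ) < Real.log (Real.log a) := hll
    have ha2 : 2 ≤ a := le_trans (le_max_left _ _) haa
    have hApos : (0:ℝ) < (a:ℝ) := by exact_mod_cast Nat.lt_of_lt_of_le Nat.zero_lt_two ha2
    have hH_lo : Real.log a ≤ ∑ i ∈ Finset.Icc 1 a, (1 : ℝ) / i := by
      rw [harmonic_sum_eq]
      have h1 : Real.log a ≤ Real.log ((a:ℝ) + 1) :=
        Real.log_le_log hApos (by linarith)
      have h2 := log_add_one_le_harmonic a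
      push_cast at h2
      linarith
    have hHpos : (0:ℝ) < ∑ i ∈ Finset.Icc 1 a, (1 : ℝ) / i := lt_of_lt_of_le hl' hH_lo
    have hra := (hbound a haa).2
    have hAH : (0:ℝ) < (a:ℝ) * ∑ i ∈ Finset.Icc 1 a, (1 : ℝ) / i := mul_pos hApos hHpos
    calc r a / ((a:ℝ) * ∑ i ∈ Finset.Icc 1 a, (1 : ℝ) / i)
        ≤ ((a:ℝ) * (Real.log a + Real.log (Real.log a) + 2))
            / ((a:ℝ) * ∑ i ∈ Finset.Icc 1 a, (1 : ℝ) / i) :=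
          by gcongr
      _ = (Real.log a + Real.log (Real.log a) + 2)
            / (∑ i ∈ Finset.Icc 1 a, (1 : ℝ) / i) :=
          mul_div_mul_left _ _ hApos.ne'
      _ ≤ (Real.log a + Real.log (Real.log a) + 2) / Real.log a :=
          div_le_div_of_nonneg_left (by linarith) hl' hH_lo
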